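/- For two scalar systems with mutual excitatory coupling ẋ_1 = f(x_1,t) + k x_2, ẋ_2 = f(x_2,t) + k x_1, the subspace {x_1 = x_2} is flow-invariant, and if k > sup_{a,t} (∂f/∂x)(a,t), then x_1(t) − x_2(t) → 0 exponentially with rate k − sup(∂f/∂x), for any initial conditions. -/

import Mathlib

lemma stmt12_key (f : ℝ → ℝ → ℝ) (f' : ℝ → ℝ → ℝ)
    (hf' : ∀ a t, HasDerivAt (fun z => f z t) (f' a t) a)
    (c : ℝ) (hc : ∀ a t, f' a t ≤ c) (t a b : ℝ) :
    (a - b) * (f a t - f b t) ≤ c * (a - b) ^ 2 := by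
  have hmono : Monotone (fun z => c * z - f z t) := by
    apply monotone_of_deriv_nonneg
    · intro z
      exact ((hasDerivAt_id z).const_mul c).sub (hf' z t) |>.differentiableAt
    · intro z
      have h : HasDerivAt (fun z => c * z - f z t) (c * 1 - f' z t) z :=
        ((hasDerivAt_id z).const_mul c).sub (hf' z t)
      rw [h.deriv]
      have := hc z t; linarith
  rcases le_total b a with h | h
  · have := hmono h
    simp only at this
    nlinarith
  · have := hmono h
    simp only at this
    nlinarith

/-- For two mutually excitatorily coupled scalar systems
ẋ₁ = f(x₁,t) + k x₂, ẋ₂ = f(x₂,t) + k x₁, the diagonal {x₁ = x₂} is flow-invariant, and if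
k > c ≥ sup ∂f/∂x, then |x₁(t) − x₂(t)| → 0 exponentially with rate k − c for any initial
conditions. -/
theorem stmt_12 (f : ℝ → ℝ → ℝ) (f' : ℝ → ℝ → ℝ)
    (hf' : ∀ a t, HasDerivAt (fun z => f z t) (f' a t) a)
    (c : ℝ) (hc : ∀ a t, f' a t ≤ c)
    (k : ℝ) (hk : c < k) :
    (∀ (a t : ℝ),
      (fun p : ℝ × ℝ => (f p.1 t + k * p.2, f p.2 t + k * p.1)) (a, a) ∈
        {p : ℝ × ℝ | p.1 = p.2}) ∧
    (∀ x₁ x₂ : ℝ → ℝ,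
      (∀ t, HasDerivAt x₁ (f (x₁ t) t + k * x₂ t) t) →
      (∀ t, HasDerivAt x₂ (f (x₂ t) t + k * x₁ t) t) →
      ∀ t : ℝ, 0 ≤ t →
        |x₁ t - x₂ t| ≤ |x₁ 0 - x₂ 0| * Real.exp (-(k - c) * t)) := by
  constructor
  · intro a t; simp
  · intro x₁ x₂ h₁ h₂ t ht
    set y : ℝ → ℝ := fun t => x₁ t - x₂ t with hy
    have hy' : ∀ s, HasDerivAt y ((f (x₁ s) s - f (x₂ s) s) - k * y s) s := by
      intro s
      have := (h₁ s).sub (h₂ s)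
      refine this.congr_deriv ?_
      simp [hy]; ring
    -- g s = (y s)^2 * exp (2 (k - c) s) is antitone
    set g : ℝ → ℝ := fun s => (y s) ^ 2 * Real.exp (2 * (k - c) * s) with hg
    have hg' : ∀ s, HasDerivAt g
        ((2 * y s * ((f (x₁ s) s - f (x₂ s) s) - k * y s)) * Real.exp (2 * (k - c) * s)
          + (y s) ^ 2 * (Real.exp (2 * (k - c) * s) * (2 * (k - c)))) s := by
      intro s
      have h1 : HasDerivAt (fun s => (y s) ^ 2)
          (2 * y s * ((f (x₁ s) s - f (x₂ s) s) - k * y s)) s := by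
        have := (hy' s).pow 2
        refine this.congr_deriv ?_
        ring
      have h2 : HasDerivAt (fun s => Real.exp (2 * (k - c) * s))
          (Real.exp (2 * (k - c) * s) * (2 * (k - c))) s := by
        have := (Real.hasDerivAt_exp (2 * (k - c) * s)).comp s
          ((hasDerivAt_id s).const_mul (2 * (k - c)))
        refine this.congr_deriv ?_
        ring
      exact h1.mul h2
    have hanti : Antitone g := by
      apply antitone_of_deriv_nonpos
      · intro s; exact (hg' s).differentiableAt
      · intro s
        rw [(hg' s).deriv]
        have hkey := stmt12_key f f' hf' c hc s (x₁ s) (x₂ s)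
        have hexp : (0:ℝ) < Real.exp (2 * (k - c) * s) := Real.exp_pos _
        have : 2 * y s * ((f (x₁ s) s - f (x₂ s) s) - k * y s) + (y s) ^ 2 * (2 * (k - c))
            ≤ 0 := by
          have : y s * (f (x₁ s) s - f (x₂ s) s) ≤ c * (y s) ^ 2 := hkey
          nlinarith
        nlinarith
    have hgt : g t ≤ g 0 := hanti ht
    simp only [hg, mul_zero, Real.exp_zero, mul_one] at hgt
    have h2 : (y t) ^ 2 ≤ (y 0) ^ 2 * (Real.exp (-(k - c) * t)) ^ 2 := by
      have hexp : Real.exp (-(k - c) * t) ^ 2 = Real.exp (-(2 * (k - c) * t)) := by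
        rw [← Real.exp_nat_mul]
        congr 1; push_cast; ring
      rw [hexp, Real.exp_neg]
      have hpos : (0:ℝ) < Real.exp (2 * (k - c) * t) := Real.exp_pos _
      rw [← div_eq_mul_inv, le_div_iff₀ hpos]
      exact hgt
    calc |y t| = |y t| := rfl
      _ ≤ |y 0| * Real.exp (-(k - c) * t) := by
          have h3 : (|y t|) ^ 2 ≤ (|y 0| * Real.exp (-(k - c) * t)) ^ 2 := by
            rw [mul_pow, sq_abs, sq_abs]; exact h2
          have h4 : 0 ≤ |y 0| * Real.exp (-(k - c) * t) :=
            mul_nonneg (abs_nonneg _) (Real.exp_pos _).le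
          exact abs_le_of_sq_le_sq' h3 h4 |>.2
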